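/- The first-order anchor, i.e. the K-algebra homomorphism Υ : A → K × K sending the class of a polynomial P to (P.eval s, P.eval t), is bijective if and only if t - s is a unit of K. -/

import Mathlib

open Polynomial

/-- The defining ideal of the first-order tangent algebra `K_{(t,s)}`. -/
noncomputable abbrev tIdeal (K : Type*) [CommRing K] (t s : K) : Ideal (Polynomial K) :=
  Ideal.span {(X - C s) * (X - C t)}

/-- The first-order tangent algebra `K_{(t,s)} = K[X] ⧸ ((X - C s) * (X - C t))`. -/
abbrev TangentAlgebra₁ (K : Type*) [CommRing K] (t s : K) :=
  Polynomial K ⧸ tIdeal K t s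

/-- The first-order anchor `Υ = (α, β) : K_{(t,s)} → K × K`, given by evaluation at `s`
and at `t`, is bijective if and only if `t - s` is a unit of `K`. -/
theorem firstOrderAnchor_bijective_iff (K : Type*) [CommRing K] (t s : K)
    (α β : TangentAlgebra₁ K t s →ₐ[K] K)
    (hα : ∀ P : Polynomial K, α (Ideal.Quotient.mk (tIdeal K t s) P) = P.eval s)
    (hβ : ∀ P : Polynomial K, β (Ideal.Quotient.mk (tIdeal K t s) P) = P.eval t) :
    Function.Bijective (fun v : TangentAlgebra₁ K t s => (α v, β v)) ↔ IsUnit (t - s) := by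
  constructor
  · rintro ⟨-, hsurj⟩
    obtain ⟨v, hv⟩ := hsurj (0, 1)
    obtain ⟨P, rfl⟩ := Ideal.Quotient.mk_surjective v
    have h1 : P.eval s = 0 := by simpa [hα P] using congrArg Prod.fst hv
    have h2 : P.eval t = 1 := by simpa [hβ P] using congrArg Prod.snd hv
    have hd : t - s ∣ P.eval t - P.eval s := sub_dvd_eval_sub t s P
    rw [h1, h2, sub_zero] at hd
    exact isUnit_of_dvd_one hd
  · intro hu
    obtain ⟨u, hu'⟩ := hu.exists_right_inv
    constructor
    · -- injective
      intro v w hvw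
      obtain ⟨P, rfl⟩ := Ideal.Quotient.mk_surjective v
      obtain ⟨Q, rfl⟩ := Ideal.Quotient.mk_surjective w
      rw [Prod.mk.injEq, hα, hα, hβ, hβ] at hvw
      obtain ⟨hs, ht⟩ := hvw
      rw [Ideal.Quotient.eq]
      have hs' : (P - Q).eval s = 0 := by simp [hs]
      have ht' : (P - Q).eval t = 0 := by simp [ht]
      obtain ⟨R, hR⟩ := (dvd_iff_isRoot (p := P - Q)).mpr hs'
      have hRt : R.eval t = 0 := by
        have hprod : (t - s) * R.eval t = 0 := by
          have h := congrArg (eval t) hR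
          simp only [eval_sub, eval_mul, eval_X, eval_C] at h
          linear_combination ht - h
        linear_combination u * hprod - R.eval t * hu'
      obtain ⟨S, hS⟩ := (dvd_iff_isRoot (p := R)).mpr hRt
      refine Ideal.mem_span_singleton.mpr ⟨S, ?_⟩
      rw [hR, hS]; ring
    · -- surjective
      rintro ⟨a, b⟩
      refine ⟨Ideal.Quotient.mk _ (C a + C ((b - a) * u) * (X - C s)), ?_⟩
      have hts : (b - a) * u * (t - s) = b - a := by
        rw [mul_assoc, mul_comm u, hu', mul_one]
      simp only [hα, hβ]
      simp [hts]
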